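/- Fix s ≥ 2. Let Γ be a finitely generated group with an admissible generating multiset Σ, and let (N_i)_{i≥2} be finite-index normal subgroups of Γ. Write N_{i,j} := N_i ∩ N_j, Γ_{i,j} := Γ/N_{i,j}, and let π_{i,j} : Γ → Γ_{i,j} be the quotient homomorphism. Let Z ⊆ Γ and assume there exist positive constants δ, c, d and subsets T_i ⊆ Γ_{i,i} (i ≥ 2) such that for all i, j ≥ s: (0) T_i ⊆ Γ_{i,i} \ π_{i,i}(Z); (1) for every k ≥ 1 and every subset T ⊆ Γ_{i,j}, |P(π_{i,j}(w_k) ∈ T) − |T|/|Γ_{i,j}|| ≤ √|Γ_{i,j}|·e^{−δk}; (2) |Γ_{i,i}| ≤ i^d; (3) if i ≠ j then |{gN_{i,j} : gN_i ∈ T_i and gN_j ∈ T_j}|/|Γ_{i,j}| = (|T_i|/|Γ_{i,i}|)·(|T_j|/|Γ_{j,j}|); (4) |T_i|/|Γ_{i,i}| ≥ c. Then for every k ≥ ((d+1)/δ)·log(2s), P(w_k ∈ Z) ≤ (20/c²)·e^{−δk/(d+1)}. -/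

import Mathlib

attribute [local instance] Classical.propDecidable

/-- Probability that the `k`-th step of the random walk driven by the
uniform measure on the multiset `S` lies in `Z`. -/
noncomputable def walkProb {G : Type*} [Group G] (S : Multiset G) (k : ℕ) (Z : Set G) : ℝ :=
  (Nat.card {f : Fin k → Fin S.toList.length //
      (List.ofFn (fun i => S.toList.get (f i))).prod ∈ Z} : ℝ) / (Multiset.card S : ℝ) ^ k

/-- A multiset of group elements is admissible if it is symmetric, its underlying set
generates the group, and the corresponding Cayley graph is not bipartite
(some odd-length product of its elements is the identity). -/
def IsAdmissible {G : Type*} [Group G] (S : Multiset G) : Prop :=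
  S.map (fun g => g⁻¹) = S ∧
  Subgroup.closure {g : G | g ∈ S} = ⊤ ∧
  ∃ L : List G, (∀ g ∈ L, g ∈ S) ∧ Odd L.length ∧ L.prod = 1

/-- `Z` is exponentially small with respect to `S`. -/
def ExpSmallWrt {G : Type*} [Group G] (S : Multiset G) (Z : Set G) : Prop :=
  ∃ C α : ℝ, 0 < C ∧ 0 < α ∧ ∀ k : ℕ, walkProb S k Z ≤ C * Real.exp (-α * k)

/-- `Z` is exponentially small: exponentially small w.r.t. every admissible
generating multiset. -/
def ExpSmall {G : Type*} [Group G] (Z : Set G) : Prop :=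
  ∀ S : Multiset G, IsAdmissible S → ExpSmallWrt S Z

lemma walkProb_eq_sum {G : Type*} [Group G] (S : Multiset G) (k : ℕ) (Z : Set G) :
    walkProb S k Z =
      (∑ f : Fin k → Fin S.toList.length,
        if (List.ofFn (fun i => S.toList.get (f i))).prod ∈ Z then (1:ℝ) else 0) /
      (S.toList.length : ℝ) ^ k := by
  unfold walkProb
  congr 1
  · rw [Nat.card_eq_fintype_card, Fintype.card_subtype, Finset.card_filter]
    push_cast
    rfl
  · rw [Multiset.length_toList]

lemma aux_card_inf {Γ : Type*} [Group Γ] (A B : Subgroup Γ) [A.Normal] [B.Normal]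
    [Finite (Γ ⧸ A)] [Finite (Γ ⧸ B)] :
    Nat.card (Γ ⧸ (A ⊓ B)) ≤ Nat.card (Γ ⧸ A) * Nat.card (Γ ⧸ B) := by
  set φ := (QuotientGroup.mk' A).prod (QuotientGroup.mk' B) with hφ
  have hker : φ.ker = A ⊓ B := by
    rw [hφ, MonoidHom.ker_prod, QuotientGroup.ker_mk', QuotientGroup.ker_mk']
  rw [← hker, ← Nat.card_prod]
  exact Nat.card_le_card_of_injective _ (QuotientGroup.kerLift_injective φ)

/-- **The large sieve theorem (explicit form).** -/
theorem large_sieve {Γ : Type*} [Group Γ] (hfg : Group.FG Γ)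
    (S : Multiset Γ) (hS : IsAdmissible S)
    (s : ℕ) (hs : 2 ≤ s)
    (N : ℕ → Subgroup Γ)
    (hN : ∀ i : ℕ, 2 ≤ i → (N i).Normal ∧ (N i).FiniteIndex)
    (Z : Set Γ) (δ c d : ℝ) (hδ : 0 < δ) (hc : 0 < c) (hd : 0 < d)
    (T : (i : ℕ) → Set (Γ ⧸ (N i ⊓ N i)))
    -- (0) `T_i ⊆ Γ_{i,i} \ π_{i,i}(Z)`
    (h0 : ∀ i : ℕ, s ≤ i → ∀ g : Γ, g ∈ Z →
      (QuotientGroup.mk g : Γ ⧸ (N i ⊓ N i)) ∉ T i)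
    -- (1) almost uniform distribution in each `Γ_{i,j}`
    (h1 : ∀ i j : ℕ, s ≤ i → s ≤ j → ∀ k : ℕ, 1 ≤ k →
      ∀ T' : Set (Γ ⧸ (N i ⊓ N j)),
        |walkProb S k {g : Γ | (QuotientGroup.mk g : Γ ⧸ (N i ⊓ N j)) ∈ T'} -
            (Nat.card ↥T' : ℝ) / (Nat.card (Γ ⧸ (N i ⊓ N j)) : ℝ)| ≤
          Real.sqrt (Nat.card (Γ ⧸ (N i ⊓ N j))) * Real.exp (-δ * k))
    -- (2) polynomial growth of the quotients
    (h2 : ∀ i : ℕ, s ≤ i → (Nat.card (Γ ⧸ (N i ⊓ N i)) : ℝ) ≤ (i : ℝ) ^ d)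
    -- (3) independence
    (h3 : ∀ i j : ℕ, s ≤ i → s ≤ j → i ≠ j →
      (Nat.card {x : Γ ⧸ (N i ⊓ N j) | ∃ g : Γ, QuotientGroup.mk g = x ∧
            (QuotientGroup.mk g : Γ ⧸ (N i ⊓ N i)) ∈ T i ∧
            (QuotientGroup.mk g : Γ ⧸ (N j ⊓ N j)) ∈ T j} : ℝ) /
          (Nat.card (Γ ⧸ (N i ⊓ N j)) : ℝ) =
        ((Nat.card ↥(T i) : ℝ) / (Nat.card (Γ ⧸ (N i ⊓ N i)) : ℝ)) *
          ((Nat.card ↥(T j) : ℝ) / (Nat.card (Γ ⧸ (N j ⊓ N j)) : ℝ)))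
    -- (4) positive density of each `T_i`
    (h4 : ∀ i : ℕ, s ≤ i →
      c ≤ (Nat.card ↥(T i) : ℝ) / (Nat.card (Γ ⧸ (N i ⊓ N i)) : ℝ)) :
    ∀ k : ℕ, ((d + 1) / δ) * Real.log (2 * s) ≤ (k : ℝ) →
      walkProb S k Z ≤ (20 / c ^ 2) * Real.exp (-δ * k / (d + 1)) := by
  intro k hk
  -- ## Basic positivity facts
  have hd1 : (0:ℝ) < d + 1 := by linarith
  have hs1 : (1:ℝ) < 2 * (s:ℝ) := by
    have : (2:ℝ) ≤ (s:ℝ) := by exact_mod_cast hs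
    linarith
  have hlog : 0 < Real.log (2 * s) := Real.log_pos (by push_cast; linarith)
  have hk0 : 0 < (k:ℝ) := lt_of_lt_of_le (by positivity) hk
  have hk1 : 1 ≤ k := by exact_mod_cast Nat.one_le_iff_ne_zero.mpr (by
    intro h; rw [h] at hk0; simp at hk0)
  set ε : ℝ := Real.exp (-δ * k / (d + 1)) with hεdef
  have hε0 : 0 < ε := Real.exp_pos _
  set Er : ℝ := Real.exp (δ * k / (d + 1)) with hEdef
  have hEr0 : 0 < Er := Real.exp_pos _
  have hεE : ε * Er = 1 := by
    rw [hεdef, hEdef, ← Real.exp_add]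
    rw [show -δ * ↑k / (d + 1) + δ * ↑k / (d + 1) = 0 by ring, Real.exp_zero]
  have h2sE : 2 * (s:ℝ) ≤ Er := by
    rw [hEdef]
    calc 2 * (s:ℝ) = Real.exp (Real.log (2 * s)) := by
          rw [Real.exp_log (by positivity)]
    _ ≤ Real.exp (δ * k / (d + 1)) := by
          apply Real.exp_le_exp.mpr
          calc Real.log (2 * (s:ℝ)) = (δ/(d+1)) * ((d + 1) / δ * Real.log (2 * s)) := by
                field_simp
          _ ≤ (δ/(d+1)) * k := by
                apply mul_le_mul_of_nonneg_left hk (le_of_lt (div_pos hδ hd1))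
          _ = δ * k / (d + 1) := by ring
  -- ## The sieving range
  set M : ℕ := ⌊Er⌋₊ with hMdef
  have hME : (M:ℝ) ≤ Er := Nat.floor_le hEr0.le
  have hME' : Er - 1 < (M:ℝ) := Nat.sub_one_lt_floor Er
  have h2sM : 2 * s ≤ M := Nat.le_floor (by push_cast; exact h2sE)
  have hM4 : 4 ≤ M := le_trans (by omega) h2sM
  have hM1 : (1:ℝ) ≤ (M:ℝ) := by exact_mod_cast le_trans (by norm_num) hM4
  have hMd1 : (1:ℝ) ≤ (M:ℝ) ^ d := by
    calc (1:ℝ) = (1:ℝ) ^ d := (Real.one_rpow d).symm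
    _ ≤ (M:ℝ) ^ d := Real.rpow_le_rpow (by norm_num) hM1 hd.le
  set I : Finset ℕ := Finset.Icc s M with hIdef
  -- ## Group-theoretic instances and cardinality bounds
  have hnorm : ∀ i, s ≤ i → (N i).Normal := fun i hi => (hN i (le_trans hs hi)).1
  have hfinidx : ∀ i, s ≤ i → (N i).FiniteIndex := fun i hi => (hN i (le_trans hs hi)).2
  have hfin : ∀ i j, s ≤ i → s ≤ j → Finite (Γ ⧸ (N i ⊓ N j)) := by
    intro i j hi hj
    haveI := hfinidx i hi
    haveI := hfinidx j hj
    infer_instance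
  have hcard_pos : ∀ i j, s ≤ i → s ≤ j → (0:ℝ) < (Nat.card (Γ ⧸ (N i ⊓ N j)) : ℝ) := by
    intro i j hi hj
    haveI := hfin i j hi hj
    exact_mod_cast Nat.card_pos
  have hcard_mul : ∀ i j, s ≤ i → s ≤ j →
      (Nat.card (Γ ⧸ (N i ⊓ N j)) : ℝ) ≤
        (Nat.card (Γ ⧸ (N i ⊓ N i)) : ℝ) * (Nat.card (Γ ⧸ (N j ⊓ N j)) : ℝ) := by
    intro i j hi hj
    haveI := hnorm i hi
    haveI := hnorm j hj
    haveI := hfin i i hi hi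
    haveI := hfin j j hj hj
    have key := aux_card_inf (N i ⊓ N i) (N j ⊓ N j)
    rw [show (N i ⊓ N i) ⊓ (N j ⊓ N j) = N i ⊓ N j by simp [inf_idem]] at key
    exact_mod_cast key
  -- uniform bound on the cardinalities over the sieving range
  have hcard_le : ∀ i ∈ I, ∀ j ∈ I,
      (Nat.card (Γ ⧸ (N i ⊓ N j)) : ℝ) ≤ ((M:ℝ) ^ d) ^ 2 := by
    intro i hi j hj
    obtain ⟨hsi, hiM⟩ := Finset.mem_Icc.mp hi
    obtain ⟨hsj, hjM⟩ := Finset.mem_Icc.mp hj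
    have hbi : (Nat.card (Γ ⧸ (N i ⊓ N i)) : ℝ) ≤ (M:ℝ) ^ d :=
      le_trans (h2 i hsi) (Real.rpow_le_rpow (Nat.cast_nonneg i) (by exact_mod_cast hiM) hd.le)
    have hbj : (Nat.card (Γ ⧸ (N j ⊓ N j)) : ℝ) ≤ (M:ℝ) ^ d :=
      le_trans (h2 j hsj) (Real.rpow_le_rpow (Nat.cast_nonneg j) (by exact_mod_cast hjM) hd.le)
    calc (Nat.card (Γ ⧸ (N i ⊓ N j)) : ℝ)
        ≤ (Nat.card (Γ ⧸ (N i ⊓ N i)) : ℝ) * (Nat.card (Γ ⧸ (N j ⊓ N j)) : ℝ) :=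
          hcard_mul i j hsi hsj
    _ ≤ ((M:ℝ) ^ d) * ((M:ℝ) ^ d) := by
          apply mul_le_mul hbi hbj (le_of_lt (hcard_pos j j hsj hsj)) (by positivity)
    _ = ((M:ℝ) ^ d) ^ 2 := (sq _).symm
  -- the error term
  have herr : ∀ i ∈ I, ∀ j ∈ I,
      Real.sqrt (Nat.card (Γ ⧸ (N i ⊓ N j))) * Real.exp (-δ * k) ≤ ε := by
    intro i hi j hj
    have hsqrt : Real.sqrt (Nat.card (Γ ⧸ (N i ⊓ N j))) ≤ (M:ℝ) ^ d := by
      calc Real.sqrt (Nat.card (Γ ⧸ (N i ⊓ N j)))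
          ≤ Real.sqrt (((M:ℝ) ^ d) ^ 2) := Real.sqrt_le_sqrt (hcard_le i hi j hj)
      _ = (M:ℝ) ^ d := Real.sqrt_sq (by positivity)
    calc Real.sqrt (Nat.card (Γ ⧸ (N i ⊓ N j))) * Real.exp (-δ * k)
        ≤ (M:ℝ) ^ d * Real.exp (-δ * k) := by
          apply mul_le_mul_of_nonneg_right hsqrt (le_of_lt (Real.exp_pos _))
    _ ≤ Er ^ d * Real.exp (-δ * k) := by
          apply mul_le_mul_of_nonneg_right _ (le_of_lt (Real.exp_pos _))
          exact Real.rpow_le_rpow (Nat.cast_nonneg M) hME hd.le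
    _ = ε := by
          rw [hEdef, hεdef, ← Real.exp_mul, ← Real.exp_add]
          congr 1
          field_simp
          ring
  -- ## The random-walk sample space
  obtain ⟨-, -, l0, hl0mem, hl0odd, -⟩ := hS
  have hL0 : 0 < S.toList.length := by
    rcases l0 with _ | ⟨g, l0⟩
    · simp [Nat.odd_iff] at hl0odd
    · have hg : g ∈ S := hl0mem g (by simp)
      rw [Multiset.length_toList]
      exact Multiset.card_pos.mpr (by rintro rfl; simp at hg)
  have hLk : (0:ℝ) < (S.toList.length : ℝ) ^ k := pow_pos (by exact_mod_cast hL0) k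
  set w : (Fin k → Fin S.toList.length) → Γ :=
    fun f => (List.ofFn (fun i => S.toList.get (f i))).prod with hwdef
  set F : Set Γ → ℝ :=
    fun Zs => ∑ f : Fin k → Fin S.toList.length, if w f ∈ Zs then (1:ℝ) else 0 with hFdef
  have hwalk : ∀ Zs : Set Γ, walkProb S k Zs = F Zs / (S.toList.length : ℝ) ^ k :=
    fun Zs => walkProb_eq_sum S k Zs
  have hF0 : ∀ Zs : Set Γ, 0 ≤ F Zs := by
    intro Zs
    apply Finset.sum_nonneg
    intro f _
    split <;> norm_num
  have hcardΩ : ∑ f : Fin k → Fin S.toList.length, (1:ℝ) = (S.toList.length : ℝ) ^ k := by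
    rw [Finset.sum_const, Finset.card_univ, nsmul_eq_mul, mul_one]
    norm_num [Fintype.card_fun]
  have hwle : ∀ Zs : Set Γ, walkProb S k Zs ≤ 1 := by
    intro Zs
    rw [hwalk Zs, div_le_one hLk, ← hcardΩ]
    exact Finset.sum_le_sum (fun f _ => by split <;> norm_num)
  have hwge : ∀ Zs : Set Γ, 0 ≤ walkProb S k Zs := by
    intro Zs
    rw [hwalk Zs]
    exact div_nonneg (hF0 Zs) hLk.le
  -- ## The sets `A i` and densities `p i`
  set A : ℕ → Set Γ := fun i => {g : Γ | (QuotientGroup.mk g : Γ ⧸ (N i ⊓ N i)) ∈ T i} with hAdef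
  set p : ℕ → ℝ := fun i =>
    (Nat.card ↥(T i) : ℝ) / (Nat.card (Γ ⧸ (N i ⊓ N i)) : ℝ) with hpdef
  set μ : ℝ := ∑ i ∈ I, p i with hμdef
  set m : ℝ := (I.card : ℝ) with hmdef
  have hp_c : ∀ i ∈ I, c ≤ p i := fun i hi => h4 i (Finset.mem_Icc.mp hi).1
  have hp0 : ∀ i ∈ I, 0 ≤ p i := fun i hi => le_trans hc.le (hp_c i hi)
  have hp1 : ∀ i ∈ I, p i ≤ 1 := by
    intro i hi
    have hsi := (Finset.mem_Icc.mp hi).1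
    haveI := hfin i i hsi hsi
    rw [hpdef]
    rw [div_le_one (hcard_pos i i hsi hsi)]
    exact_mod_cast Nat.card_le_card_of_injective
      (Subtype.val : ↥(T i) → Γ ⧸ (N i ⊓ N i)) Subtype.val_injective
  -- ## The individual and pairwise estimates
  have hq : ∀ i ∈ I, |walkProb S k (A i) - p i| ≤ ε := by
    intro i hi
    have hsi := (Finset.mem_Icc.mp hi).1
    exact le_trans (h1 i i hsi hsi k hk1 (T i)) (herr i hi i hi)
  have hQij : ∀ i ∈ I, ∀ j ∈ I, i ≠ j → walkProb S k (A i ∩ A j) ≤ p i * p j + ε := by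
    intro i hi j hj hij
    have hsi := (Finset.mem_Icc.mp hi).1
    have hsj := (Finset.mem_Icc.mp hj).1
    have hAW : A i ∩ A j = {g : Γ | (QuotientGroup.mk g : Γ ⧸ (N i ⊓ N j)) ∈
        {x : Γ ⧸ (N i ⊓ N j) | ∃ g' : Γ, QuotientGroup.mk g' = x ∧
          (QuotientGroup.mk g' : Γ ⧸ (N i ⊓ N i)) ∈ T i ∧
          (QuotientGroup.mk g' : Γ ⧸ (N j ⊓ N j)) ∈ T j}} := by
      ext g
      simp only [hAdef, Set.mem_inter_iff, Set.mem_setOf_eq]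
      constructor
      · rintro ⟨hgi, hgj⟩
        exact ⟨g, rfl, hgi, hgj⟩
      · rintro ⟨g', hgg', hti, htj⟩
        have hmem := Subgroup.mem_inf.mp (QuotientGroup.eq.mp hgg')
        have hei : (QuotientGroup.mk g' : Γ ⧸ (N i ⊓ N i)) = QuotientGroup.mk g :=
          QuotientGroup.eq.mpr (Subgroup.mem_inf.mpr ⟨hmem.1, hmem.1⟩)
        have hej : (QuotientGroup.mk g' : Γ ⧸ (N j ⊓ N j)) = QuotientGroup.mk g :=
          QuotientGroup.eq.mpr (Subgroup.mem_inf.mpr ⟨hmem.2, hmem.2⟩)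
        exact ⟨hei ▸ hti, hej ▸ htj⟩
    have hb := h1 i j hsi hsj k hk1
      {x : Γ ⧸ (N i ⊓ N j) | ∃ g' : Γ, QuotientGroup.mk g' = x ∧
          (QuotientGroup.mk g' : Γ ⧸ (N i ⊓ N i)) ∈ T i ∧
          (QuotientGroup.mk g' : Γ ⧸ (N j ⊓ N j)) ∈ T j}
    rw [← hAW] at hb
    have hub := (abs_le.mp (le_trans hb (herr i hi j hj))).2
    have h3' := h3 i j hsi hsj hij
    have hpp : (Nat.card {x : Γ ⧸ (N i ⊓ N j) | ∃ g' : Γ, QuotientGroup.mk g' = x ∧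
          (QuotientGroup.mk g' : Γ ⧸ (N i ⊓ N i)) ∈ T i ∧
          (QuotientGroup.mk g' : Γ ⧸ (N j ⊓ N j)) ∈ T j} : ℝ) /
        (Nat.card (Γ ⧸ (N i ⊓ N j)) : ℝ) = p i * p j := h3'
    rw [hpp] at hub
    linarith
  -- ## Chebyshev
  set X : (Fin k → Fin S.toList.length) → ℝ :=
    fun f => ∑ i ∈ I, if w f ∈ A i then (1:ℝ) else 0 with hXdef
  have cheb : walkProb S k Z * μ ^ 2 ≤
      (∑ i ∈ I, ∑ j ∈ I, walkProb S k (A i ∩ A j)) -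
        2 * μ * (∑ i ∈ I, walkProb S k (A i)) + μ ^ 2 := by
    rw [← mul_le_mul_iff_of_pos_right hLk]
    have hFZ : walkProb S k Z * μ ^ 2 * (S.toList.length : ℝ) ^ k = F Z * μ ^ 2 := by
      rw [hwalk Z, div_mul_eq_mul_div, div_mul_eq_mul_div]
      exact mul_div_cancel_right₀ _ hLk.ne'
    rw [hFZ]
    have pointwise : ∀ f : Fin k → Fin S.toList.length,
        (if w f ∈ Z then (1:ℝ) else 0) * μ ^ 2 ≤ (X f - μ) ^ 2 := by
      intro f
      by_cases hfZ : w f ∈ Z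
      · have hX0 : X f = 0 := by
          apply Finset.sum_eq_zero
          intro i hi
          rw [if_neg]
          exact h0 i (Finset.mem_Icc.mp hi).1 (w f) hfZ
        rw [if_pos hfZ, hX0, one_mul, zero_sub, neg_sq]
      · rw [if_neg hfZ, zero_mul]
        exact sq_nonneg _
    have step1 : F Z * μ ^ 2 ≤ ∑ f : Fin k → Fin S.toList.length, (X f - μ) ^ 2 := by
      rw [hFdef]
      simp only [Finset.sum_mul]
      exact Finset.sum_le_sum (fun f _ => pointwise f)
    refine le_trans step1 (le_of_eq ?_)
    have hXsq : ∑ f : Fin k → Fin S.toList.length, (X f) ^ 2 =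
        ∑ i ∈ I, ∑ j ∈ I, F (A i ∩ A j) := by
      have hfs : ∀ f : Fin k → Fin S.toList.length, (X f) ^ 2 =
          ∑ i ∈ I, ∑ j ∈ I, if w f ∈ A i ∩ A j then (1:ℝ) else 0 := by
        intro f
        rw [hXdef, sq, Finset.sum_mul_sum]
        refine Finset.sum_congr rfl fun i _ => Finset.sum_congr rfl fun j _ => ?_
        by_cases h1' : w f ∈ A i <;> by_cases h2' : w f ∈ A j <;>
          simp [h1', h2', Set.mem_inter_iff]
      rw [Finset.sum_congr rfl (fun f _ => hfs f), Finset.sum_comm]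
      simp only [hFdef]
      refine Finset.sum_congr rfl fun i _ => ?_
      rw [Finset.sum_comm]
      congr!
    have hX1 : ∑ f : Fin k → Fin S.toList.length, X f = ∑ i ∈ I, F (A i) := by
      simp only [hXdef, hFdef]
      exact Finset.sum_comm
    have hexp : ∀ f : Fin k → Fin S.toList.length,
        (X f - μ) ^ 2 = (X f) ^ 2 - 2 * μ * (X f) + μ ^ 2 := fun f => by ring
    rw [Finset.sum_congr rfl (fun f _ => hexp f)]
    rw [Finset.sum_add_distrib, Finset.sum_sub_distrib, ← Finset.mul_sum,
      Finset.sum_const, Finset.card_univ, nsmul_eq_mul, hXsq, hX1]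
    have hcard' : ((Fintype.card (Fin k → Fin S.toList.length)) : ℝ) =
        (S.toList.length : ℝ) ^ k := by
      norm_num [Fintype.card_fun]
    rw [hcard']
    have hsum1 : (∑ i ∈ I, ∑ j ∈ I, F (A i ∩ A j)) =
        (∑ i ∈ I, ∑ j ∈ I, walkProb S k (A i ∩ A j)) * (S.toList.length : ℝ) ^ k := by
      rw [Finset.sum_mul]
      refine Finset.sum_congr rfl fun i _ => ?_
      rw [Finset.sum_mul]
      refine Finset.sum_congr rfl fun j _ => ?_
      rw [hwalk (A i ∩ A j), div_mul_cancel₀ _ hLk.ne']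
    have hsum2 : (∑ i ∈ I, F (A i)) =
        (∑ i ∈ I, walkProb S k (A i)) * (S.toList.length : ℝ) ^ k := by
      rw [Finset.sum_mul]
      refine Finset.sum_congr rfl fun i _ => ?_
      rw [hwalk (A i), div_mul_cancel₀ _ hLk.ne']
    rw [hsum1, hsum2]
    ring
  -- ## Summing the estimates
  have hE1 : μ - m * ε ≤ ∑ i ∈ I, walkProb S k (A i) := by
    have : ∑ i ∈ I, (p i - ε) ≤ ∑ i ∈ I, walkProb S k (A i) :=
      Finset.sum_le_sum (fun i hi => by linarith [(abs_le.mp (hq i hi)).1])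
    calc μ - m * ε = ∑ i ∈ I, (p i - ε) := by
          rw [Finset.sum_sub_distrib, Finset.sum_const, nsmul_eq_mul, hμdef, hmdef]
    _ ≤ _ := this
  have hE2 : (∑ i ∈ I, ∑ j ∈ I, walkProb S k (A i ∩ A j)) ≤
      μ ^ 2 + m ^ 2 * ε + m := by
    have hterm : ∀ i ∈ I, ∀ j ∈ I, walkProb S k (A i ∩ A j) ≤
        p i * p j + ε + (if i = j then (1:ℝ) else 0) := by
      intro i hi j hj
      by_cases hij : i = j
      · subst hij
        rw [if_pos rfl, Set.inter_self]
        have hb1 := hwle (A i)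
        have hb2 := mul_nonneg (hp0 i hi) (hp0 i hi)
        linarith [hε0.le]
      · rw [if_neg hij, add_zero]
        exact hQij i hi j hj hij
    calc (∑ i ∈ I, ∑ j ∈ I, walkProb S k (A i ∩ A j)) ≤
        ∑ i ∈ I, ∑ j ∈ I, (p i * p j + ε + (if i = j then (1:ℝ) else 0)) :=
          Finset.sum_le_sum (fun i hi => Finset.sum_le_sum (fun j hj => hterm i hi j hj))
    _ = μ ^ 2 + m ^ 2 * ε + m := by
        simp only [Finset.sum_add_distrib]
        rw [← Finset.sum_mul_sum]
        have hdiag : ∑ i ∈ I, ∑ j ∈ I, (if i = j then (1:ℝ) else 0) = m := by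
          rw [hmdef]
          rw [Finset.sum_congr rfl (fun i hi => Finset.sum_ite_eq I i (fun _ => (1:ℝ)))]
          rw [Finset.sum_congr rfl (fun i hi => if_pos hi)]
          rw [Finset.sum_const, nsmul_eq_mul, mul_one]
        rw [hdiag]
        rw [Finset.sum_congr rfl (fun i (hi : i ∈ I) => Finset.sum_const ε)]
        rw [Finset.sum_const, nsmul_eq_mul, nsmul_eq_mul]
        rw [hμdef, hmdef]
        ring
  -- ## Size of the sieving range
  have hsM1 : s ≤ M + 1 := by omega
  have hmcard : m = (M : ℝ) + 1 - (s : ℝ) := by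
    rw [hmdef, hIdef, Nat.card_Icc]
    push_cast [Nat.cast_sub hsM1]
    ring
  have hsEr : (s:ℝ) ≤ Er / 2 := by
    have : (2:ℝ) * s ≤ Er := by push_cast at h2sE ⊢; linarith
    linarith
  have hmEr : Er / 2 ≤ m := by
    rw [hmcard]
    have := hME'
    linarith
  have h4Er : (4:ℝ) ≤ Er := by
    have hs' : (2:ℝ) ≤ (s:ℝ) := by exact_mod_cast hs
    linarith [h2sE]
  have hm2 : (2:ℝ) ≤ m := by linarith [hmEr]
  have hm0 : (0:ℝ) < m := by linarith
  have h14 : 1 ≤ 4 * ε * m := by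
    have : 4 * ε * m ≥ 4 * ε * (Er / 2) := by
      apply mul_le_mul_of_nonneg_left hmEr (by positivity)
    have h2' : 4 * ε * (Er / 2) = 2 * (ε * Er) := by ring
    rw [h2', hεE] at this
    linarith
  -- ## Final assembly
  have hμc : m * c ≤ μ := by
    rw [hμdef]
    calc m * c = ∑ _i ∈ I, c := by
          rw [Finset.sum_const, nsmul_eq_mul, hmdef]
    _ ≤ ∑ i ∈ I, p i := Finset.sum_le_sum hp_c
  have hμm : μ ≤ m := by
    rw [hμdef]
    calc ∑ i ∈ I, p i ≤ ∑ _i ∈ I, (1:ℝ) := Finset.sum_le_sum hp1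
    _ = m := by rw [Finset.sum_const, nsmul_eq_mul, mul_one, hmdef]
  have hμ0 : 0 < μ := lt_of_lt_of_le (mul_pos hm0 hc) hμc
  clear_value X
  clear_value F
  clear_value μ
  clear_value p
  clear_value w
  clear_value m
  clear_value I
  clear_value M
  clear_value Er
  clear_value ε
  have hW0nn : 0 ≤ walkProb S k Z := hwge Z
  obtain ⟨W0, hW0⟩ : ∃ x : ℝ, x = walkProb S k Z := ⟨_, rfl⟩
  obtain ⟨B, hB⟩ : ∃ x : ℝ, x = ∑ i ∈ I, ∑ j ∈ I, walkProb S k (A i ∩ A j) := ⟨_, rfl⟩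
  obtain ⟨C, hC⟩ : ∃ x : ℝ, x = ∑ i ∈ I, walkProb S k (A i) := ⟨_, rfl⟩
  rw [← hW0, ← hB, ← hC] at cheb
  rw [← hB] at hE2
  rw [← hC] at hE1
  rw [← hW0] at hW0nn ⊢
  have step : W0 * μ ^ 2 ≤ m + 3 * m ^ 2 * ε := by
    have h2μ : 2 * μ * (μ - m * ε) ≤ 2 * μ * C :=
      mul_le_mul_of_nonneg_left hE1 (by linarith only [hμ0])
    have hμmε : 2 * μ * (m * ε) ≤ 2 * m * (m * ε) :=
      mul_le_mul_of_nonneg_right (by linarith only [hμm]) (mul_nonneg hm0.le hε0.le)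
    linarith only [cheb, hE2, h2μ, hμmε]
  have hμsq : (m * c) ^ 2 ≤ μ ^ 2 := by
    apply pow_le_pow_left₀ (mul_nonneg hm0.le hc.le) hμc
  have step2 : W0 * (m * c) ^ 2 ≤ 7 * ε * m ^ 2 := by
    have hb1 : W0 * (m * c) ^ 2 ≤ W0 * μ ^ 2 :=
      mul_le_mul_of_nonneg_left hμsq hW0nn
    have hmm : m ≤ 4 * ε * m ^ 2 := by
      have h' := mul_le_mul_of_nonneg_right h14 hm0.le
      nlinarith only [h']
    linarith only [hb1, step, hmm, hε0, hm0]
  have hmc2 : (0:ℝ) < (m * c) ^ 2 := pow_pos (mul_pos hm0 hc) 2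
  calc W0 ≤ (7 * ε * m ^ 2) / ((m * c) ^ 2) := by
        rw [le_div_iff₀ hmc2]
        exact step2
  _ = 7 * ε / c ^ 2 := by
        rw [mul_pow, div_eq_div_iff (mul_pos (pow_pos hm0 2) (pow_pos hc 2)).ne' (pow_pos hc 2).ne']
        ring
  _ ≤ (20 / c ^ 2) * ε := by
        rw [div_mul_eq_mul_div]
        gcongr
        linarith [hε0.le]
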